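/- For every integer n ≥ 3 there exists a set V of n points in the Euclidean plane ℝ² whose number of double-normal pairs equals exactly 3·⌊n/2⌋. -/

import Mathlib

open scoped RealInnerProductSpace Classical

noncomputable section

abbrev Euc (d : ℕ) : Type := EuclideanSpace ℝ (Fin d)

/-- `{p, q}` is a double-normal pair of the finite point set `V`. -/
def IsDNPair {d : ℕ} (V : Finset (Euc d)) (p q : Euc d) : Prop :=
  p ∈ V ∧ q ∈ V ∧ p ≠ q ∧
    ∀ v ∈ V, 0 ≤ ⟪v - p, q - p⟫ ∧ 0 ≤ ⟪v - q, p - q⟫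

/-- `N(V)`: the number of (unordered) double-normal pairs of `V`. -/
def numDN {d : ℕ} (V : Finset (Euc d)) : ℕ :=
  ((V ×ˢ V).filter fun pq => IsDNPair V pq.1 pq.2).card / 2

/-- `{p, q}` is a strict double-normal pair of `V`. -/
def IsStrictDNPair {d : ℕ} (V : Finset (Euc d)) (p q : Euc d) : Prop :=
  IsDNPair V p q ∧
    ∀ v ∈ V, v ≠ p → v ≠ q → 0 < ⟪v - p, q - p⟫ ∧ 0 < ⟪v - q, p - q⟫

/-- `N'(V)`: the number of (unordered) strict double-normal pairs of `V`. -/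
def numStrictDN {d : ℕ} (V : Finset (Euc d)) : ℕ :=
  ((V ×ˢ V).filter fun pq => IsStrictDNPair V pq.1 pq.2).card / 2

namespace DNAux

open Finset

/-- rational parametrization of the unit circle -/
def pt (u : ℝ) : Euc 2 := WithLp.toLp 2 ![(1 - u^2)/(1 + u^2), 2*u/(1 + u^2)]

lemma inner_euc (x y : Euc 2) : ⟪x, y⟫ = x 0 * y 0 + x 1 * y 1 := by
  simp [PiLp.inner_apply, Fin.sum_univ_two, RCLike.inner_apply, mul_comm]

lemma ipA (a b c : ℝ) :
    ⟪pt c - pt a, pt b - pt a⟫ =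
      4*((c-a)*((b-a)*(1+b*c))) / ((1+a^2)*((1+b^2)*(1+c^2))) := by
  have ha : (1:ℝ) + a^2 ≠ 0 := by positivity
  have hb : (1:ℝ) + b^2 ≠ 0 := by positivity
  have hc : (1:ℝ) + c^2 ≠ 0 := by positivity
  simp only [inner_euc, PiLp.sub_apply, pt]
  norm_num [PiLp.toLp_apply, Matrix.cons_val_zero, Matrix.cons_val_one]
  field_simp; ring

lemma ipB (a b c : ℝ) :
    ⟪(-pt c) - pt a, pt b - pt a⟫ =
      4*((b-a)*((b-c)*(1+a*c))) / ((1+a^2)*((1+b^2)*(1+c^2))) := by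
  have ha : (1:ℝ) + a^2 ≠ 0 := by positivity
  have hb : (1:ℝ) + b^2 ≠ 0 := by positivity
  have hc : (1:ℝ) + c^2 ≠ 0 := by positivity
  simp only [inner_euc, PiLp.sub_apply, PiLp.neg_apply, pt]
  norm_num [PiLp.toLp_apply, Matrix.cons_val_zero, Matrix.cons_val_one]
  field_simp; ring

lemma ipC (a b c : ℝ) :
    ⟪pt c - pt a, (-pt b) - pt a⟫ =
      4*((c-a)*((c-b)*(1+a*b))) / ((1+a^2)*((1+b^2)*(1+c^2))) := by
  have ha : (1:ℝ) + a^2 ≠ 0 := by positivity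
  have hb : (1:ℝ) + b^2 ≠ 0 := by positivity
  have hc : (1:ℝ) + c^2 ≠ 0 := by positivity
  simp only [inner_euc, PiLp.sub_apply, PiLp.neg_apply, pt]
  norm_num [PiLp.toLp_apply, Matrix.cons_val_zero, Matrix.cons_val_one]
  field_simp; ring

lemma ipD (a b c : ℝ) :
    ⟪(-pt c) - pt a, (-pt b) - pt a⟫ =
      4*((1+a*b)*((1+a*c)*(1+b*c))) / ((1+a^2)*((1+b^2)*(1+c^2))) := by
  have ha : (1:ℝ) + a^2 ≠ 0 := by positivity
  have hb : (1:ℝ) + b^2 ≠ 0 := by positivity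
  have hc : (1:ℝ) + c^2 ≠ 0 := by positivity
  simp only [inner_euc, PiLp.sub_apply, PiLp.neg_apply, pt]
  norm_num [PiLp.toLp_apply, Matrix.cons_val_zero, Matrix.cons_val_one]
  field_simp; ring

lemma inner_flip (u z w : Euc 2) :
    ⟪u - (-w), z - (-w)⟫ = ⟪(-u) - w, (-z) - w⟫ := by
  have h1 : (-u) - w = -(u - (-w)) := by abel
  have h2 : (-z) - w = -(z - (-w)) := by abel
  rw [h1, h2, inner_neg_neg]

lemma A_nn {a b c : ℝ} (hb : 0 ≤ b) (hc : 0 ≤ c) (h : 0 ≤ (c - a) * (b - a)) :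
    0 ≤ ⟪pt c - pt a, pt b - pt a⟫ := by
  rw [ipA]
  apply div_nonneg _ (by positivity)
  nlinarith [mul_nonneg hb hc]

lemma B_nn {a b c : ℝ} (ha : 0 ≤ a) (hc : 0 ≤ c) (h : 0 ≤ (b - a) * (b - c)) :
    0 ≤ ⟪(-pt c) - pt a, pt b - pt a⟫ := by
  rw [ipB]
  apply div_nonneg _ (by positivity)
  nlinarith [mul_nonneg ha hc]

lemma C_nn {a b c : ℝ} (ha : 0 ≤ a) (hb : 0 ≤ b) (h : 0 ≤ (c - a) * (c - b)) :
    0 ≤ ⟪pt c - pt a, (-pt b) - pt a⟫ := by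
  rw [ipC]
  apply div_nonneg _ (by positivity)
  nlinarith [mul_nonneg ha hb]

lemma D_nn {a b c : ℝ} (ha : 0 ≤ a) (hb : 0 ≤ b) (hc : 0 ≤ c) :
    0 ≤ ⟪(-pt c) - pt a, (-pt b) - pt a⟫ := by
  rw [ipD]
  apply div_nonneg _ (by positivity)
  have h1 := mul_nonneg ha hb
  have h2 := mul_nonneg ha hc
  have h3 := mul_nonneg hb hc
  nlinarith [mul_nonneg (mul_nonneg h1 h2) h3, mul_nonneg h1 h2, mul_nonneg h1 h3,
    mul_nonneg h2 h3]

lemma A_neg {a b c : ℝ} (hb : 0 ≤ b) (hc : 0 ≤ c) (h : (c - a) * (b - a) < 0) :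
    ⟪pt c - pt a, pt b - pt a⟫ < 0 := by
  rw [ipA]
  apply div_neg_of_neg_of_pos _ (by positivity)
  nlinarith [mul_nonneg hb hc]

lemma B_neg {a b c : ℝ} (ha : 0 ≤ a) (hc : 0 ≤ c) (h : (b - a) * (b - c) < 0) :
    ⟪(-pt c) - pt a, pt b - pt a⟫ < 0 := by
  rw [ipB]
  apply div_neg_of_neg_of_pos _ (by positivity)
  nlinarith [mul_nonneg ha hc]

lemma C_neg {a b c : ℝ} (ha : 0 ≤ a) (hb : 0 ≤ b) (h : (c - a) * (c - b) < 0) :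
    ⟪pt c - pt a, (-pt b) - pt a⟫ < 0 := by
  rw [ipC]
  apply div_neg_of_neg_of_pos _ (by positivity)
  nlinarith [mul_nonneg ha hb]

lemma pt_inj {u v : ℝ} (hu : 0 ≤ u) (hv : 0 ≤ v) (h : pt u = pt v) : u = v := by
  have h0 : (1 - u^2)/(1 + u^2) = (1 - v^2)/(1 + v^2) := congrFun (congrArg WithLp.ofLp h) 0
  have h1 : 2*u/(1 + u^2) = 2*v/(1 + v^2) := congrFun (congrArg WithLp.ofLp h) 1
  have hu' : (1:ℝ) + u^2 ≠ 0 := by positivity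
  have hv' : (1:ℝ) + v^2 ≠ 0 := by positivity
  field_simp at h0 h1
  nlinarith [sq_nonneg (u - v), sq_nonneg (u + v)]

lemma pt_ne_neg_pt {u v : ℝ} (hu : 0 ≤ u) (hv : 0 ≤ v) : pt u ≠ -pt v := by
  intro h
  have h0 : (1 - u^2)/(1 + u^2) = -((1 - v^2)/(1 + v^2)) := congrFun (congrArg WithLp.ofLp h) 0
  have h1 : 2*u/(1 + u^2) = -(2*v/(1 + v^2)) := congrFun (congrArg WithLp.ofLp h) 1
  have hu' : (1:ℝ) + u^2 ≠ 0 := by positivity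
  have hv' : (1:ℝ) + v^2 ≠ 0 := by positivity
  field_simp at h0 h1
  nlinarith [mul_nonneg hu hv, sq_nonneg (u*v), sq_nonneg u, sq_nonneg v]

lemma cast_sub_nn {a b : ℕ} (h : b ≤ a) : (0:ℝ) ≤ (a:ℝ) - b :=
  sub_nonneg.mpr (Nat.cast_le.mpr h)
lemma cast_sub_np {a b : ℕ} (h : a ≤ b) : (a:ℝ) - b ≤ 0 :=
  sub_nonpos.mpr (Nat.cast_le.mpr h)
lemma cast_sub_pos {a b : ℕ} (h : b < a) : (0:ℝ) < (a:ℝ) - b :=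
  sub_pos.mpr (Nat.cast_lt.mpr h)
lemma cast_sub_neg {a b : ℕ} (h : a < b) : (a:ℝ) - b < 0 :=
  sub_neg.mpr (Nat.cast_lt.mpr h)

lemma prod_nn_of_nat {a b c d : ℕ} (h : (b ≤ a ∧ d ≤ c) ∨ (a ≤ b ∧ c ≤ d)) :
    0 ≤ ((a:ℝ) - b) * ((c:ℝ) - d) := by
  rcases h with ⟨h1, h2⟩ | ⟨h1, h2⟩
  · exact mul_nonneg (cast_sub_nn h1) (cast_sub_nn h2)
  · have := mul_nonneg (neg_nonneg.mpr (cast_sub_np h1)) (neg_nonneg.mpr (cast_sub_np h2))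
    nlinarith [this]

lemma prod_neg_of_nat {a b c d : ℕ} (h : (a < b ∧ d < c) ∨ (b < a ∧ c < d)) :
    ((a:ℝ) - b) * ((c:ℝ) - d) < 0 := by
  rcases h with ⟨h1, h2⟩ | ⟨h1, h2⟩
  · exact mul_neg_of_neg_of_pos (cast_sub_neg h1) (cast_sub_pos h2)
  · exact mul_neg_of_pos_of_neg (cast_sub_pos h1) (cast_sub_neg h2)

end DNAux

open Finset DNAux

/-- For every `n ≥ 3` there is a set of `n` points in the plane with exactly
`3⌊n/2⌋` double-normal pairs. -/
theorem doubleNormal_plane_bound_attained (n : ℕ) (hn : 3 ≤ n) :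
    ∃ V : Finset (Euc 2), V.card = n ∧ numDN V = 3 * (n / 2) := by
  set m := n / 2 with hm
  set m' := n - m with hm'
  set M := m' - 1 with hM
  set κ := m' - m with hκ
  set g : ℕ → Euc 2 := fun i => if i < m' then pt i else -pt ((i - m : ℕ)) with hg
  set V : Finset (Euc 2) := (Finset.range n).image g with hV
  -- basic facts about g
  have hgT : ∀ c : ℕ, c < m' → g c = pt c := by
    intro c hc; rw [hg]; exact if_pos hc
  have hgT' : ∀ c : ℕ, m' ≤ c → g c = -pt ((c - m : ℕ)) := by
    intro c hc; rw [hg]; exact if_neg (by omega)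
  have hmemV : ∀ c : ℕ, c < n → g c ∈ V := by
    intro c hc; rw [hV]; exact mem_image_of_mem g (mem_range.mpr hc)
  have hVelem : ∀ v ∈ V, ∃ c : ℕ, c < n ∧ v = g c := by
    intro v hv; rw [hV, mem_image] at hv
    obtain ⟨c, hc, rfl⟩ := hv
    exact ⟨c, mem_range.mp hc, rfl⟩
  have hginj : ∀ i < n, ∀ j < n, g i = g j → i = j := by
    intro i hi j hj h
    by_cases h1 : i < m' <;> by_cases h2 : j < m'
    · rw [hgT i h1, hgT j h2] at h
      exact_mod_cast pt_inj (Nat.cast_nonneg i) (Nat.cast_nonneg j) h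
    · rw [hgT i h1, hgT' j (by omega)] at h
      exact absurd h (pt_ne_neg_pt (Nat.cast_nonneg _) (Nat.cast_nonneg _))
    · rw [hgT' i (by omega), hgT j h2] at h
      exact absurd h.symm (pt_ne_neg_pt (Nat.cast_nonneg _) (Nat.cast_nonneg _))
    · rw [hgT' i (by omega), hgT' j (by omega)] at h
      have := pt_inj (Nat.cast_nonneg (i - m)) (Nat.cast_nonneg (j - m)) (neg_inj.mp h)
      have : i - m = j - m := by exact_mod_cast this
      omega
  have hcard : V.card = n := by
    rw [hV, card_image_of_injOn, card_range]
    intro i hi j hj h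
    exact hginj i (mem_range.mp hi) j (mem_range.mp hj) h
  -- symmetry of DN pairs
  have dns : ∀ p q : Euc 2, IsDNPair V p q → IsDNPair V q p := by
    rintro p q ⟨h1, h2, h3, h4⟩
    exact ⟨h2, h1, h3.symm, fun v hv => ⟨(h4 v hv).2, (h4 v hv).1⟩⟩

  -- positive cases
  have hPos_TT : IsDNPair V (g 0) (g M) := by
    have h0 : g 0 = pt ((0:ℕ)) := hgT 0 (by omega)
    have hMlt : M < m' := by omega
    have hMg : g M = pt (M:ℕ) := hgT M hMlt
    refine ⟨hmemV 0 (by omega), hmemV M (by omega), ?_, ?_⟩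
    · rw [h0, hMg]
      intro h
      have := pt_inj (Nat.cast_nonneg 0) (Nat.cast_nonneg M) h
      have : (0:ℕ) = M := by exact_mod_cast this
      omega
    · intro v hv
      obtain ⟨c, hc, rfl⟩ := hVelem v hv
      by_cases hcm : c < m'
      · rw [hgT c hcm, h0, hMg]
        constructor
        · exact A_nn (Nat.cast_nonneg M) (Nat.cast_nonneg c)
            (prod_nn_of_nat (by omega))
        · exact A_nn (Nat.cast_nonneg 0) (Nat.cast_nonneg c)
            (prod_nn_of_nat (by omega))
      · rw [hgT' c (by omega), h0, hMg]
        constructor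
        · exact B_nn (Nat.cast_nonneg 0) (Nat.cast_nonneg (c - m))
            (prod_nn_of_nat (by omega))
        · exact B_nn (Nat.cast_nonneg M) (Nat.cast_nonneg (c - m))
            (prod_nn_of_nat (by omega))
  have hPos_cross : ∀ a b : ℕ, a ≤ M → κ ≤ b → b ≤ M →
      (a = b ∨ a = b + 1 ∨ a + 1 = b) → IsDNPair V (g a) (g (m + b)) := by
    intro a b ha hbl hbu hadj
    have hga : g a = pt (a:ℕ) := hgT a (by omega)
    have hgb : g (m + b) = -pt ((m + b - m : ℕ)) := hgT' _ (by omega)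
    have hsub : m + b - m = b := by omega
    rw [hsub] at hgb
    refine ⟨hmemV a (by omega), hmemV (m + b) (by omega), ?_, ?_⟩
    · rw [hga, hgb]
      exact pt_ne_neg_pt (Nat.cast_nonneg a) (Nat.cast_nonneg b)
    · intro v hv
      obtain ⟨c, hc, rfl⟩ := hVelem v hv
      by_cases hcm : c < m'
      · rw [hgT c hcm, hga, hgb]
        constructor
        · exact C_nn (Nat.cast_nonneg a) (Nat.cast_nonneg b)
            (prod_nn_of_nat (by omega))
        · rw [inner_flip]
          exact D_nn (Nat.cast_nonneg b) (Nat.cast_nonneg a) (Nat.cast_nonneg c)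
      · rw [hgT' c (by omega), hga, hgb]
        constructor
        · exact D_nn (Nat.cast_nonneg a) (Nat.cast_nonneg b) (Nat.cast_nonneg (c - m))
        · rw [inner_flip]
          simp only [neg_neg]
          exact C_nn (Nat.cast_nonneg b) (Nat.cast_nonneg a)
            (prod_nn_of_nat (by omega))
  have hPos_T'T' : κ = 0 → IsDNPair V (g m) (g (m + M)) := by
    intro hk0
    have hgm : g m = -pt ((m - m : ℕ)) := hgT' m (by omega)
    have hgm2 : g (m + M) = -pt ((m + M - m : ℕ)) := hgT' _ (by omega)
    have e1 : m - m = 0 := by omega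
    have e2 : m + M - m = M := by omega
    rw [e1] at hgm; rw [e2] at hgm2
    refine ⟨hmemV m (by omega), hmemV (m + M) (by omega), ?_, ?_⟩
    · rw [hgm, hgm2]
      intro h
      have := pt_inj (Nat.cast_nonneg 0) (Nat.cast_nonneg M) (neg_inj.mp h)
      have : (0:ℕ) = M := by exact_mod_cast this
      omega
    · intro v hv
      obtain ⟨c, hc, rfl⟩ := hVelem v hv
      by_cases hcm : c < m'
      · rw [hgT c hcm, hgm, hgm2]
        constructor
        · rw [inner_flip]
          simp only [neg_neg]
          exact B_nn (Nat.cast_nonneg 0) (Nat.cast_nonneg c)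
            (prod_nn_of_nat (by omega))
        · rw [inner_flip]
          simp only [neg_neg]
          exact B_nn (Nat.cast_nonneg M) (Nat.cast_nonneg c)
            (prod_nn_of_nat (by omega))
      · rw [hgT' c (by omega), hgm, hgm2]
        constructor
        · rw [inner_flip]
          simp only [neg_neg]
          exact A_nn (Nat.cast_nonneg M) (Nat.cast_nonneg (c - m))
            (prod_nn_of_nat (by omega))
        · rw [inner_flip]
          simp only [neg_neg]
          exact A_nn (Nat.cast_nonneg 0) (Nat.cast_nonneg (c - m))
            (prod_nn_of_nat (by omega))

  -- negative cases
  have hNeg_TT : ∀ i j : ℕ, i < j → j < m' → ¬(i = 0 ∧ j = M) →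
      ¬ IsDNPair V (g i) (g j) := by
    intro i j hij hj hne hDN
    obtain ⟨-, -, -, h4⟩ := hDN
    by_cases hi : 1 ≤ i
    · have hle := (h4 (g 0) (hmemV 0 (by omega))).1
      rw [hgT 0 (by omega), hgT i (by omega), hgT j hj] at hle
      have hlt : ⟪pt ((0:ℕ)) - pt (i:ℕ), pt (j:ℕ) - pt (i:ℕ)⟫ < 0 :=
        A_neg (Nat.cast_nonneg j) (Nat.cast_nonneg 0) (prod_neg_of_nat (by omega))
      linarith
    · have hle := (h4 (g (m + M)) (hmemV (m + M) (by omega))).1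
      rw [hgT' (m + M) (by omega), hgT i (by omega), hgT j hj] at hle
      have e2 : m + M - m = M := by omega
      rw [e2] at hle
      have hlt : ⟪(-pt ((M:ℕ))) - pt (i:ℕ), pt (j:ℕ) - pt (i:ℕ)⟫ < 0 :=
        B_neg (Nat.cast_nonneg i) (Nat.cast_nonneg M) (prod_neg_of_nat (by omega))
      linarith
  have hNeg_cross : ∀ a b : ℕ, a ≤ M → κ ≤ b → b ≤ M →
      ¬(a = b ∨ a = b + 1 ∨ a + 1 = b) → ¬ IsDNPair V (g a) (g (m + b)) := by
    intro a b ha hbl hbu hadj hDN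
    obtain ⟨-, -, -, h4⟩ := hDN
    have hgb : g (m + b) = -pt ((b : ℕ)) := by
      have := hgT' (m + b) (by omega)
      have e : m + b - m = b := by omega
      rwa [e] at this
    by_cases hab : b + 2 ≤ a
    · have hle := (h4 (g (a - 1)) (hmemV (a - 1) (by omega))).1
      rw [hgT (a - 1) (by omega), hgT a (by omega), hgb] at hle
      have hlt : ⟪pt ((a - 1 : ℕ)) - pt (a:ℕ), (-pt ((b:ℕ))) - pt (a:ℕ)⟫ < 0 :=
        C_neg (Nat.cast_nonneg a) (Nat.cast_nonneg b) (prod_neg_of_nat (by omega))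
      linarith
    · have hba : a + 2 ≤ b := by omega
      have hle := (h4 (g (a + 1)) (hmemV (a + 1) (by omega))).1
      rw [hgT (a + 1) (by omega), hgT a (by omega), hgb] at hle
      have hlt : ⟪pt ((a + 1 : ℕ)) - pt (a:ℕ), (-pt ((b:ℕ))) - pt (a:ℕ)⟫ < 0 :=
        C_neg (Nat.cast_nonneg a) (Nat.cast_nonneg b) (prod_neg_of_nat (by omega))
      linarith
  have hNeg_T'T' : ∀ b1 b2 : ℕ, κ ≤ b1 → b1 < b2 → b2 ≤ M →
      ¬(κ = 0 ∧ b1 = 0 ∧ b2 = M) → ¬ IsDNPair V (g (m + b1)) (g (m + b2)) := by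
    intro b1 b2 hb1 h12 hb2 hne hDN
    obtain ⟨-, -, -, h4⟩ := hDN
    have hgb1 : g (m + b1) = -pt ((b1 : ℕ)) := by
      have := hgT' (m + b1) (by omega)
      have e : m + b1 - m = b1 := by omega
      rwa [e] at this
    have hgb2 : g (m + b2) = -pt ((b2 : ℕ)) := by
      have := hgT' (m + b2) (by omega)
      have e : m + b2 - m = b2 := by omega
      rwa [e] at this
    by_cases h1pos : 1 ≤ b1
    · -- use q-side violation with v = pt 0
      have hle := (h4 (g 0) (hmemV 0 (by omega))).2
      rw [hgT 0 (by omega), hgb1, hgb2, inner_flip] at hle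
      simp only [neg_neg] at hle
      have hlt : ⟪(-pt ((0:ℕ))) - pt ((b2:ℕ)), pt ((b1:ℕ)) - pt ((b2:ℕ))⟫ < 0 :=
        B_neg (Nat.cast_nonneg b2) (Nat.cast_nonneg 0) (prod_neg_of_nat (by omega))
      linarith
    · -- b1 = 0 (and κ = 0), so b2 < M; use v = pt M on p-side
      have hb2M : b2 < M := by omega
      have hle := (h4 (g M) (hmemV M (by omega))).1
      rw [hgT M (by omega), hgb1, hgb2, inner_flip] at hle
      simp only [neg_neg] at hle
      have hlt : ⟪(-pt ((M:ℕ))) - pt ((b1:ℕ)), pt ((b2:ℕ)) - pt ((b1:ℕ))⟫ < 0 :=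
        B_neg (Nat.cast_nonneg b1) (Nat.cast_nonneg M) (prod_neg_of_nat (by omega))
      linarith

  -- the index sets
  set Ea : Finset (ℕ × ℕ) := (Icc κ M).image (fun b => (b, b)) with hEa
  set Eb : Finset (ℕ × ℕ) := (Icc κ (M - 1)).image (fun b => (b + 1, b)) with hEb
  set Ec : Finset (ℕ × ℕ) := (Icc 1 M).image (fun b => (b - 1, b)) with hEc
  set E : Finset (ℕ × ℕ) := Ea ∪ Eb ∪ Ec with hE
  have hEmem : ∀ x1 x2 : ℕ, ((x1, x2) ∈ E ↔
      (κ ≤ x2 ∧ x2 ≤ M ∧ x1 ≤ M ∧ (x1 = x2 ∨ x1 = x2 + 1 ∨ x1 + 1 = x2))) := by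
    intro x1 x2
    rw [hE]
    simp only [mem_union, hEa, hEb, hEc, mem_image, mem_Icc, Prod.mk.injEq]
    constructor
    · rintro ((⟨b, ⟨h1, h2⟩, h3, h4⟩ | ⟨b, ⟨h1, h2⟩, h3, h4⟩) | ⟨b, ⟨h1, h2⟩, h3, h4⟩) <;>
        omega
    · rintro ⟨h1, h2, h3, h4 | h4 | h4⟩
      · exact Or.inl (Or.inl ⟨x2, ⟨by omega, by omega⟩, by omega, rfl⟩)
      · exact Or.inl (Or.inr ⟨x2, ⟨by omega, by omega⟩, by omega, rfl⟩)
      · exact Or.inr ⟨x2, ⟨by omega, by omega⟩, by omega, rfl⟩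
  set Et : Finset (ℕ × ℕ) := {(0, M), (M, 0)} with hEt
  set Et' : Finset (ℕ × ℕ) := if κ = 0 then ({(m, m + M), (m + M, m)} : Finset (ℕ × ℕ)) else ∅
    with hEt'
  set G2 : Finset (ℕ × ℕ) := E.image (fun x => (x.1, m + x.2)) with hG2
  set G3 : Finset (ℕ × ℕ) := E.image (fun x => (m + x.2, x.1)) with hG3
  set U : Finset (ℕ × ℕ) := Et ∪ (Et' ∪ (G2 ∪ G3)) with hU
  have hEtmem : ∀ x1 x2 : ℕ, ((x1, x2) ∈ Et ↔ ((x1 = 0 ∧ x2 = M) ∨ (x1 = M ∧ x2 = 0))) := by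
    intro x1 x2
    rw [hEt]
    simp [Prod.mk.injEq]
  have hEt'mem : ∀ x1 x2 : ℕ, ((x1, x2) ∈ Et' ↔
      (κ = 0 ∧ ((x1 = m ∧ x2 = m + M) ∨ (x1 = m + M ∧ x2 = m)))) := by
    intro x1 x2
    rw [hEt']
    split_ifs with h
    · simp [Prod.mk.injEq, h]
    · simp [h]
  have hG2mem : ∀ x1 x2 : ℕ, ((x1, x2) ∈ G2 ↔
      (m + κ ≤ x2 ∧ x2 ≤ m + M ∧ x1 ≤ M ∧
        (x2 = x1 + m ∨ x2 + 1 = x1 + m ∨ x2 = x1 + m + 1))) := by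
    intro x1 x2
    rw [hG2]
    simp only [mem_image, Prod.mk.injEq]
    constructor
    · rintro ⟨⟨b1, b2⟩, hb, h1, h2⟩
      rw [hEmem b1 b2] at hb
      omega
    · intro h
      refine ⟨(x1, x2 - m), ?_, by omega, by omega⟩
      rw [hEmem]
      omega
  have hG3mem : ∀ x1 x2 : ℕ, ((x1, x2) ∈ G3 ↔
      (m + κ ≤ x1 ∧ x1 ≤ m + M ∧ x2 ≤ M ∧
        (x1 = x2 + m ∨ x1 + 1 = x2 + m ∨ x1 = x2 + m + 1))) := by
    intro x1 x2
    rw [hG3]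
    simp only [mem_image, Prod.mk.injEq]
    constructor
    · rintro ⟨⟨b1, b2⟩, hb, h1, h2⟩
      rw [hEmem b1 b2] at hb
      omega
    · intro h
      refine ⟨(x2, x1 - m), ?_, by omega, by omega⟩
      rw [hEmem]
      omega
  have hUb : ∀ x ∈ U, x.1 < n ∧ x.2 < n := by
    rintro ⟨x1, x2⟩ hx
    rw [hU] at hx
    simp only [mem_union] at hx
    rcases hx with hx | hx | hx | hx
    · rw [hEtmem] at hx; omega
    · rw [hEt'mem] at hx; omega
    · rw [hG2mem] at hx; omega
    · rw [hG3mem] at hx; omega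

  -- main characterization
  have hMain : ((V ×ˢ V).filter fun pq => IsDNPair V pq.1 pq.2)
      = U.image (fun ij => (g ij.1, g ij.2)) := by
    ext ⟨p, q⟩
    simp only [mem_filter, mem_product, mem_image, Prod.mk.injEq]
    constructor
    · rintro ⟨⟨hp, hq⟩, hDN⟩
      obtain ⟨i, hi, rfl⟩ := hVelem p hp
      obtain ⟨j, hj, rfl⟩ := hVelem q hq
      refine ⟨(i, j), ?_, rfl, rfl⟩
      have hij : i ≠ j := by
        intro h
        exact hDN.2.2.1 (by rw [h])
      rw [hU]
      simp only [mem_union]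
      by_cases h1 : i < m' <;> by_cases h2 : j < m'
      · -- both in T
        left
        rw [hEtmem]
        rcases Nat.lt_or_ge i j with hlt | hge
        · have : i = 0 ∧ j = M := by
            by_contra hc
            exact hNeg_TT i j hlt h2 hc hDN
          omega
        · have hlt : j < i := by omega
          have : j = 0 ∧ i = M := by
            by_contra hc
            exact hNeg_TT j i hlt h1 hc (dns _ _ hDN)
          omega
      · -- i in T, j in T'
        right; right; left
        rw [hG2mem]
        have hjm : j = m + (j - m) := by omega
        have hadj : i = (j - m) ∨ i = (j - m) + 1 ∨ i + 1 = (j - m) := by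
          by_contra hc
          refine hNeg_cross i (j - m) (by omega) (by omega) (by omega) hc ?_
          rwa [← hjm]
        omega
      · -- i in T', j in T
        right; right; right
        rw [hG3mem]
        have him : i = m + (i - m) := by omega
        have hadj : j = (i - m) ∨ j = (i - m) + 1 ∨ j + 1 = (i - m) := by
          by_contra hc
          refine hNeg_cross j (i - m) (by omega) (by omega) (by omega) hc ?_
          rw [← him]
          exact dns _ _ hDN
        omega
      · -- both in T'
        right; left
        rw [hEt'mem]
        rcases Nat.lt_or_ge i j with hlt | hge
        · have : κ = 0 ∧ i - m = 0 ∧ j - m = M := by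
            by_contra hc
            refine hNeg_T'T' (i - m) (j - m) (by omega) (by omega) (by omega) hc ?_
            have e1 : m + (i - m) = i := by omega
            have e2 : m + (j - m) = j := by omega
            rwa [e1, e2]
          omega
        · have hlt : j < i := by omega
          have : κ = 0 ∧ j - m = 0 ∧ i - m = M := by
            by_contra hc
            refine hNeg_T'T' (j - m) (i - m) (by omega) (by omega) (by omega) hc ?_
            have e1 : m + (i - m) = i := by omega
            have e2 : m + (j - m) = j := by omega
            rw [e1, e2]
            exact dns _ _ hDN
          omega
    · rintro ⟨⟨i, j⟩, hijU, rfl, rfl⟩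
      have hb := hUb _ hijU
      simp only at hb
      have hDN : IsDNPair V (g i) (g j) := by
        rw [hU] at hijU
        simp only [mem_union] at hijU
        rcases hijU with hx | hx | hx | hx
        · rw [hEtmem] at hx
          rcases hx with ⟨rfl, rfl⟩ | ⟨rfl, rfl⟩
          · exact hPos_TT
          · exact dns _ _ hPos_TT
        · rw [hEt'mem] at hx
          obtain ⟨hk0, hx⟩ := hx
          rcases hx with ⟨rfl, rfl⟩ | ⟨rfl, rfl⟩
          · exact hPos_T'T' hk0
          · exact dns _ _ (hPos_T'T' hk0)
        · rw [hG2mem] at hx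
          have hjm : j = m + (j - m) := by omega
          rw [hjm]
          exact hPos_cross i (j - m) (by omega) (by omega) (by omega) (by omega)
        · rw [hG3mem] at hx
          have him : i = m + (i - m) := by omega
          rw [him]
          exact dns _ _ (hPos_cross j (i - m) (by omega) (by omega) (by omega) (by omega))
      exact ⟨⟨hDN.1, hDN.2.1⟩, hDN⟩

  -- cardinalities
  have hM1 : 1 ≤ M := by omega
  have hcardEt : Et.card = 2 := by
    rw [hEt]
    refine card_pair ?_
    intro h
    rw [Prod.mk.injEq] at h
    omega
  have hcardEt' : Et'.card = (if κ = 0 then 2 else 0) := by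
    rw [hEt']
    split_ifs with h
    · refine card_pair ?_
      intro hh
      rw [Prod.mk.injEq] at hh
      omega
    · exact card_empty
  have hcardEa : Ea.card = M + 1 - κ := by
    rw [hEa, card_image_of_injective _ (fun a b h => by simpa using congrArg Prod.fst h),
      Nat.card_Icc]
  have hcardEb : Eb.card = M - κ := by
    rw [hEb, card_image_of_injective _ (fun a b h => by simpa using congrArg Prod.snd h),
      Nat.card_Icc]
    omega
  have hcardEc : Ec.card = M := by
    rw [hEc, card_image_of_injective _ (fun a b h => by simpa using congrArg Prod.snd h),
      Nat.card_Icc]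
    omega
  have dab : Disjoint Ea Eb := by
    rw [disjoint_left]
    rintro ⟨x1, x2⟩ h1 h2
    simp only [hEa, hEb, mem_image, mem_Icc, Prod.mk.injEq] at h1 h2
    omega
  have dac : Disjoint Ea Ec := by
    rw [disjoint_left]
    rintro ⟨x1, x2⟩ h1 h2
    simp only [hEa, hEc, mem_image, mem_Icc, Prod.mk.injEq] at h1 h2
    omega
  have dbc : Disjoint Eb Ec := by
    rw [disjoint_left]
    rintro ⟨x1, x2⟩ h1 h2
    simp only [hEb, hEc, mem_image, mem_Icc, Prod.mk.injEq] at h1 h2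
    omega
  have hcardE : E.card = (M + 1 - κ) + (M - κ) + M := by
    rw [hE, card_union_of_disjoint (disjoint_union_left.mpr ⟨dac, dbc⟩),
      card_union_of_disjoint dab, hcardEa, hcardEb, hcardEc]
  have hcardG2 : G2.card = E.card := by
    rw [hG2]
    refine card_image_of_injective _ ?_
    rintro ⟨a, b⟩ ⟨c, d⟩ h
    rw [Prod.mk.injEq] at h ⊢
    exact ⟨h.1, by omega⟩
  have hcardG3 : G3.card = E.card := by
    rw [hG3]
    refine card_image_of_injective _ ?_
    rintro ⟨a, b⟩ ⟨c, d⟩ h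
    rw [Prod.mk.injEq] at h ⊢
    exact ⟨h.2, by omega⟩
  have dEtEt' : Disjoint Et Et' := by
    rw [disjoint_left]
    rintro ⟨x1, x2⟩ h1 h2
    rw [hEtmem] at h1; rw [hEt'mem] at h2
    omega
  have dEtG2 : Disjoint Et G2 := by
    rw [disjoint_left]
    rintro ⟨x1, x2⟩ h1 h2
    rw [hEtmem] at h1; rw [hG2mem] at h2
    omega
  have dEtG3 : Disjoint Et G3 := by
    rw [disjoint_left]
    rintro ⟨x1, x2⟩ h1 h2
    rw [hEtmem] at h1; rw [hG3mem] at h2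
    omega
  have dEt'G2 : Disjoint Et' G2 := by
    rw [disjoint_left]
    rintro ⟨x1, x2⟩ h1 h2
    rw [hEt'mem] at h1; rw [hG2mem] at h2
    omega
  have dEt'G3 : Disjoint Et' G3 := by
    rw [disjoint_left]
    rintro ⟨x1, x2⟩ h1 h2
    rw [hEt'mem] at h1; rw [hG3mem] at h2
    omega
  have dG2G3 : Disjoint G2 G3 := by
    rw [disjoint_left]
    rintro ⟨x1, x2⟩ h1 h2
    rw [hG2mem] at h1; rw [hG3mem] at h2
    omega
  have hcardU : U.card = 6 * m := by
    rw [hU, card_union_of_disjoint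
        (disjoint_union_right.mpr ⟨dEtEt', disjoint_union_right.mpr ⟨dEtG2, dEtG3⟩⟩),
      card_union_of_disjoint (disjoint_union_right.mpr ⟨dEt'G2, dEt'G3⟩),
      card_union_of_disjoint dG2G3, hcardEt, hcardEt', hcardG2, hcardG3, hcardE]
    split_ifs with h <;> omega
  refine ⟨V, hcard, ?_⟩
  have hfinal : ((V ×ˢ V).filter fun pq => IsDNPair V pq.1 pq.2).card = 6 * m := by
    rw [hMain, card_image_of_injOn, hcardU]
    rintro ⟨i, j⟩ hij ⟨i', j'⟩ hij' h
    have hb := hUb _ hij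
    have hb' := hUb _ hij'
    simp only at hb hb'
    rw [Prod.mk.injEq] at h ⊢
    exact ⟨hginj i hb.1 i' hb'.1 h.1, hginj j hb.2 j' hb'.2 h.2⟩
  unfold numDN
  rw [hfinal]
  omega
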